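/- (Sublevel-set invariance lemma from the proof of the ISS Lyapunov theorem.) Let α4 be of class 𝒦∞ with id − α4 of class 𝒦 (where id(t) = t), and let ρ be of class 𝒦∞ with id − ρ of class 𝒦∞. Let b ≥ 0 and set s := ρ(α4(b)). Suppose v : ℕ → [0,∞) satisfies v(k+1) ≤ v(k) − α4(v(k)) + s for all k ∈ ℕ. If v(k0) ≤ b for some k0 ∈ ℕ, then v(k) ≤ b for all k ≥ k0. -/
import Mathlib


noncomputable section

/-- Class 𝒦 functions `[0,∞) → [0,∞)`. -/
def IsClassK (φ : ℝ → ℝ) : Prop :=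
  ContinuousOn φ (Set.Ici 0) ∧ StrictMonoOn φ (Set.Ici 0) ∧ φ 0 = 0 ∧ ∀ t, 0 ≤ t → 0 ≤ φ t

/-- Class 𝒦∞ functions. -/
def IsClassKInf (φ : ℝ → ℝ) : Prop :=
  IsClassK φ ∧ Filter.Tendsto φ Filter.atTop Filter.atTop

/-- **Sublevel-set invariance lemma from the proof of the ISS Lyapunov theorem.** -/
theorem sublevel_invariance
    (α4 ρ : ℝ → ℝ)
    (hα4 : IsClassKInf α4) (hid4 : IsClassK fun t => t - α4 t)
    (hρ : IsClassKInf ρ) (hidρ : IsClassKInf fun t => t - ρ t)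
    (b : ℝ) (hb : 0 ≤ b)
    (v : ℕ → ℝ) (hvnn : ∀ k, 0 ≤ v k)
    (hdec : ∀ k, v (k + 1) ≤ v k - α4 (v k) + ρ (α4 b))
    (k0 : ℕ) (hk0 : v k0 ≤ b) :
    ∀ k, k0 ≤ k → v k ≤ b := by
  intro k hk
  induction k with
  | zero =>
    have : k0 = 0 := Nat.le_zero.mp hk
    simpa [this] using hk0
  | succ n ih =>
    rcases Nat.lt_or_ge k0 (n + 1) with h | h
    · have hn : k0 ≤ n := Nat.lt_succ_iff.mp h
      have hvn : v n ≤ b := ih hn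
      have hα4b : 0 ≤ α4 b := hα4.1.2.2.2 b hb
      -- v n - α4 (v n) ≤ b - α4 b
      have hmono : v n - α4 (v n) ≤ b - α4 b := by
        have := hid4.2.1.monotoneOn (Set.mem_Ici.mpr (hvnn n)) (Set.mem_Ici.mpr hb) hvn
        simpa using this
      -- ρ (α4 b) ≤ α4 b
      have hρle : ρ (α4 b) ≤ α4 b := by
        have := hidρ.1.2.2.2 (α4 b) hα4b
        simp only at this
        linarith
      calc v (n + 1) ≤ v n - α4 (v n) + ρ (α4 b) := hdec n
        _ ≤ b - α4 b + α4 b := by linarith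
        _ = b := by ring
    · have : k0 = n + 1 := le_antisymm hk h
      simpa [← this] using hk0
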